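/- Let n ≥ 3 and let F ⊆ 2^{[n]} be a union-efficient family, i.e., for every subfamily {A_1,...,A_m} of F whose union equals [n], there exist indices i, j with A_i ∪ A_j = [n]. Then |F| ≤ 2^{n-1} + n. -/

import Mathlib

open Finset

/-- A family `F` of subsets of `[n]` is union-efficient if whenever the union of a
subfamily equals `[n]`, two of its members already have union `[n]`. -/
def UnionEfficient {n : ℕ} (F : Finset (Finset (Fin n))) : Prop :=
  ∀ S : Finset (Finset (Fin n)), S ⊆ F → S.sup id = Finset.univ →
    ∃ A ∈ S, ∃ B ∈ S, A ∪ B = Finset.univ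

/-- Descent lemma: if `H` is a complement-closed family of proper nonempty sets such that
every pairwise-intersecting subfamily has a common point, then for any `G ⊆ H` all of whose
members contain a fixed nonempty set `Y`, we have `|G| + |Y| ≤ n`. -/
lemma descent {n : ℕ} (H : Finset (Finset (Fin n)))
    (hcompl : ∀ C ∈ H, Cᶜ ∈ H)
    (hnu : ∀ C ∈ H, C ≠ Finset.univ)
    (hQ : ∀ S : Finset (Finset (Fin n)), S ⊆ H →
      (∀ A ∈ S, ∀ B ∈ S, (A ∩ B).Nonempty) → ∃ y, ∀ A ∈ S, y ∈ A) :
    ∀ (m : ℕ) (G : Finset (Finset (Fin n))) (Y : Finset (Fin n)), G.card = m → G ⊆ H →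
      Y.Nonempty → (∀ C ∈ G, Y ⊆ C) → G.card + Y.card ≤ n := by
  intro m
  induction m with
  | zero =>
    intro G Y hc hG hY hYC
    rw [hc, Nat.zero_add]
    simpa using Finset.card_le_univ Y
  | succ m ih =>
    intro G Y hc hG hY hYC
    have hGne : G.Nonempty := by
      rw [← Finset.card_pos, hc]; omega
    obtain ⟨C, hCG, hCmin⟩ : ∃ C ∈ G, ∀ D ∈ G, ¬ D < C := by
      obtain ⟨C, hC⟩ := Finset.exists_minimal hGne
      exact ⟨C, hC.1, fun D hD hlt => hlt.not_ge (hC.2 hD hlt.le)⟩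
    set S : Finset (Finset (Fin n)) := insert Cᶜ (G.erase C) with hSdef
    have hS : S ⊆ H := by
      intro A hA
      rcases Finset.mem_insert.mp hA with rfl | hA'
      · exact hcompl C (hG hCG)
      · exact hG (Finset.mem_of_mem_erase hA')
    have hCcne : (Cᶜ : Finset (Fin n)).Nonempty := by
      rw [Finset.nonempty_iff_ne_empty]
      intro h
      apply hnu C (hG hCG)
      have := congrArg (fun s => sᶜ) h
      simpa using this
    have hDsub : ∀ D ∈ G.erase C, (Cᶜ ∩ D).Nonempty := by
      intro D hD
      rw [Finset.nonempty_iff_ne_empty]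
      intro hemp
      have hDC : D ⊆ C := by
        intro y hy
        by_contra hyC
        have : y ∈ Cᶜ ∩ D := Finset.mem_inter.mpr ⟨Finset.mem_compl.mpr hyC, hy⟩
        simp [hemp] at this
      have hne : D ≠ C := Finset.ne_of_mem_erase hD
      exact hCmin D (Finset.mem_of_mem_erase hD) (lt_of_le_of_ne hDC hne)
    have hSint : ∀ A ∈ S, ∀ B ∈ S, (A ∩ B).Nonempty := by
      intro A hA B hB
      rcases Finset.mem_insert.mp hA with rfl | hA' <;>
        rcases Finset.mem_insert.mp hB with rfl | hB'
      · simpa using hCcne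
      · exact hDsub B hB'
      · obtain ⟨y, hy⟩ := hDsub A hA'
        exact ⟨y, by rw [Finset.inter_comm]; exact hy⟩
      · obtain ⟨y, hy⟩ := hY
        exact ⟨y, Finset.mem_inter.mpr ⟨hYC A (Finset.mem_of_mem_erase hA') hy,
          hYC B (Finset.mem_of_mem_erase hB') hy⟩⟩
    obtain ⟨y, hy⟩ := hQ S hS hSint
    have hyCc : y ∈ Cᶜ := hy _ (Finset.mem_insert_self _ _)
    have hyC : y ∉ C := Finset.mem_compl.mp hyCc
    have hyY : y ∉ Y := fun h => hyC (hYC C hCG h)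
    have hkey := ih (G.erase C) (insert y Y)
      (by rw [Finset.card_erase_of_mem hCG, hc]; rfl)
      ((Finset.erase_subset _ _).trans hG)
      (Finset.insert_nonempty _ _)
      (by
        intro D hD
        apply Finset.insert_subset
        · exact hy D (Finset.mem_insert_of_mem hD)
        · exact hYC D (Finset.mem_of_mem_erase hD))
    rw [Finset.card_erase_of_mem hCG, Finset.card_insert_of_notMem hyY, hc] at hkey
    omega

theorem stmt_6 (n : ℕ) (hn : 3 ≤ n) (F : Finset (Finset (Fin n)))
    (hF : UnionEfficient F) :
    F.card ≤ 2 ^ (n - 1) + n := by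
  classical
  -- P : sets in F whose complement is also in F
  set P : Finset (Finset (Fin n)) := F.filter (fun A => Aᶜ ∈ F) with hPdef
  -- Step 1 : 2 * |F| ≤ 2^n + |P|
  have hstep1 : 2 * F.card ≤ 2 ^ n + P.card := by
    set Fc : Finset (Finset (Fin n)) := F.image (fun A => Aᶜ) with hFcdef
    have hinj : Function.Injective (fun A : Finset (Fin n) => Aᶜ) := fun A B h => by
      have := congrArg (fun s => sᶜ) h
      simpa using this
    have hcard : Fc.card = F.card := Finset.card_image_of_injective F hinj
    have hmemFc : ∀ A : Finset (Fin n), A ∈ Fc ↔ Aᶜ ∈ F := by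
      intro A
      constructor
      · rintro hA
        obtain ⟨B, hB, rfl⟩ := Finset.mem_image.mp hA
        simpa using hB
      · intro h
        exact Finset.mem_image.mpr ⟨Aᶜ, h, by simp⟩
    have hint : F ∩ Fc = P := by
      ext A
      simp only [Finset.mem_inter, hPdef, Finset.mem_filter, hmemFc]
    have h1 : (F ∪ Fc).card + (F ∩ Fc).card = F.card + Fc.card :=
      Finset.card_union_add_card_inter F Fc
    have h2 : (F ∪ Fc).card ≤ 2 ^ n := by
      have := Finset.card_le_univ (F ∪ Fc)
      simpa [Fintype.card_finset] using this
    rw [hint, hcard] at h1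
    omega
  -- Step 2 : |P| ≤ 2 * n
  have hstep2 : P.card ≤ 2 * n := by
    set H : Finset (Finset (Fin n)) :=
      P.filter (fun C => C ≠ ∅ ∧ C ≠ Finset.univ) with hHdef
    have hPF : ∀ A ∈ P, A ∈ F ∧ Aᶜ ∈ F := by
      intro A hA
      exact Finset.mem_filter.mp hA
    have hHcompl : ∀ C ∈ H, Cᶜ ∈ H := by
      intro C hC
      have hCmem := Finset.mem_filter.mp hC
      have hCP := hCmem.1
      have hC1 := hCmem.2.1
      have hC2 := hCmem.2.2
      obtain ⟨hCF, hCcF⟩ := hPF C hCP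
      refine Finset.mem_filter.mpr ⟨Finset.mem_filter.mpr ⟨hCcF, by simpa using hCF⟩, ?_, ?_⟩
      · intro h
        apply hC2
        have := congrArg (fun s => sᶜ) h
        simpa using this
      · intro h
        apply hC1
        have := congrArg (fun s => sᶜ) h
        simpa using this
    have hHnu : ∀ C ∈ H, C ≠ Finset.univ := fun C hC => (Finset.mem_filter.mp hC).2.2
    have hHne : ∀ C ∈ H, C ≠ ∅ := fun C hC => (Finset.mem_filter.mp hC).2.1
    -- the common-point property, from union-efficiency
    have hQ : ∀ S : Finset (Finset (Fin n)), S ⊆ H →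
        (∀ A ∈ S, ∀ B ∈ S, (A ∩ B).Nonempty) → ∃ y, ∀ A ∈ S, y ∈ A := by
      intro S hSH hSint
      by_contra hno
      push_neg at hno
      set T : Finset (Finset (Fin n)) := S.image (fun A => Aᶜ) with hTdef
      have hTF : T ⊆ F := by
        intro B hB
        obtain ⟨A, hA, rfl⟩ := Finset.mem_image.mp hB
        exact ((hPF A (Finset.mem_filter.mp (hSH hA)).1).2)
      have hTsup : T.sup id = Finset.univ := by
        apply Finset.eq_univ_of_forall
        intro y
        obtain ⟨A, hA, hyA⟩ := hno y
        have : (Aᶜ : Finset (Fin n)) ∈ T := Finset.mem_image.mpr ⟨A, hA, rfl⟩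
        exact Finset.mem_sup.mpr ⟨Aᶜ, this, Finset.mem_compl.mpr hyA⟩
      obtain ⟨B1, hB1, B2, hB2, hBu⟩ := hF T hTF hTsup
      obtain ⟨A1, hA1, rfl⟩ := Finset.mem_image.mp hB1
      obtain ⟨A2, hA2, rfl⟩ := Finset.mem_image.mp hB2
      have : A1 ∩ A2 = ∅ := by
        have := congrArg (fun s => sᶜ) hBu
        simpa [Finset.compl_union] using this
      obtain ⟨y, hy⟩ := hSint A1 hA1 A2 hA2
      rw [this] at hy
      simp at hy
    -- apply the descent lemma with x = 0
    have hx : (0 : ℕ) < n := by omega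
    set x : Fin n := ⟨0, hx⟩ with hxdef
    set Hx : Finset (Finset (Fin n)) := H.filter (fun C => x ∈ C) with hHxdef
    have hHxcard : Hx.card + 1 ≤ n := by
      have := descent H hHcompl hHnu hQ Hx.card Hx {x} rfl (Finset.filter_subset _ _)
        (Finset.singleton_nonempty x)
        (by
          intro C hC
          simp only [Finset.singleton_subset_iff]
          exact (Finset.mem_filter.mp hC).2)
      simpa using this
    -- |H| ≤ 2 * |Hx| via the complement injection
    have hHsplit : H.card ≤ 2 * Hx.card := by
      have hHeq : H = Hx ∪ H.filter (fun C => x ∉ C) := by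
        rw [hHxdef, Finset.filter_union_filter_not_eq]
      have hinj2 : ((H.filter (fun C => x ∉ C)).card ≤ Hx.card) := by
        apply Finset.card_le_card_of_injOn (fun C => Cᶜ)
        · intro C hC
          obtain ⟨hCH, hCx⟩ := Finset.mem_filter.mp hC
          exact Finset.mem_filter.mpr ⟨hHcompl C hCH, Finset.mem_compl.mpr hCx⟩
        · intro C _ D _ h
          have := congrArg (fun s => sᶜ) h
          simpa using this
      have hcu : H.card ≤ Hx.card + (H.filter (fun C => x ∉ C)).card := by
        conv_lhs => rw [hHeq]
        exact Finset.card_union_le _ _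
      omega
    -- |P| ≤ |H| + 2
    have hPH : P.card ≤ H.card + 2 := by
      have hsub : P ⊆ H ∪ {∅, Finset.univ} := by
        intro A hA
        by_cases h1 : A = ∅
        · exact Finset.mem_union_right _ (by simp [h1])
        by_cases h2 : A = Finset.univ
        · exact Finset.mem_union_right _ (by simp [h2])
        · exact Finset.mem_union_left _ (Finset.mem_filter.mpr ⟨hA, h1, h2⟩)
      calc P.card ≤ (H ∪ {∅, Finset.univ}).card := Finset.card_le_card hsub
        _ ≤ H.card + ({∅, Finset.univ} : Finset (Finset (Fin n))).card :=
            Finset.card_union_le _ _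
        _ ≤ H.card + 2 := by
            have : ({∅, Finset.univ} : Finset (Finset (Fin n))).card ≤ 2 :=
              Finset.card_le_two
            omega
    omega
  -- conclude
  have hpow : 2 ^ n = 2 * 2 ^ (n - 1) := by
    conv_lhs => rw [show n = (n - 1) + 1 by omega]
    rw [pow_succ]
    ring
  omega
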